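/- arXiv:2311.02430 — 6 statements merged into one kernel-verified Lean document; each statement's English description precedes it below -/
import Mathlib

section
/- Let G be a co-chordal graph (G^c is chordal) and let x_1 be a simplicial vertex of G^c. Define the graph G̃ on vertex set V(G) \ {x_1} whose edges are the edges of G \ x_1 together with all pairs {x_i, x_j} that are edges of G^c \ x_1 with N_{G^c}(x_1) ∩ {x_i, x_j} = ∅. Then G̃ is co-chordal, i.e., G̃^c is chordal. -/
/-- A graph is chordal if it has no induced cycle of length at least 4. -/
def SimpleGraph.IsChordal {V : Type*} (G : SimpleGraph V) : Prop :=
  ∀ n : ℕ, 4 ≤ n → IsEmpty (SimpleGraph.cycleGraph n ↪g G)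

open Fin.NatCast Fin.CommRing

section Aux

/-- In a cycle of length at least 4, `j` and `j + 2` are not adjacent. -/
lemma cycle_notadj_two (m : ℕ) (j : Fin (m + 4)) :
    ¬ (SimpleGraph.cycleGraph (m + 4)).Adj j (j + ((2 : ℕ) : Fin (m + 4))) := by
  rw [SimpleGraph.cycleGraph_adj']
  have h1 : (j + ((2 : ℕ) : Fin (m + 4)) - j) = ((2 : ℕ) : Fin (m + 4)) := by ring
  have h2 : (j - (j + ((2 : ℕ) : Fin (m + 4)))) = -((2 : ℕ) : Fin (m + 4)) := by ring
  have h3 : -((2 : ℕ) : Fin (m + 4)) = (((m + 2 : ℕ)) : Fin (m + 4)) := by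
    rw [neg_eq_iff_add_eq_zero, ← Nat.cast_add, show 2 + (m + 2) = m + 4 from by omega,
      Fin.natCast_self]
  rw [h1, h2, h3]
  simp only [Fin.val_natCast]
  rw [Nat.mod_eq_of_lt (by omega), Nat.mod_eq_of_lt (by omega)]
  omega

lemma cycle_ne_two (m : ℕ) (j : Fin (m + 4)) :
    j ≠ j + ((2 : ℕ) : Fin (m + 4)) := by
  intro h
  have h0 : j + 0 = j + ((2 : ℕ) : Fin (m + 4)) := by rw [add_zero]; exact h
  have h2 := add_left_cancel h0
  have h4 := congrArg Fin.val h2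
  rw [Fin.val_natCast, Nat.mod_eq_of_lt (by omega)] at h4
  simp at h4

lemma cycle_adj_one (m : ℕ) (j : Fin (m + 4)) :
    (SimpleGraph.cycleGraph (m + 4)).Adj j (j + ((1 : ℕ) : Fin (m + 4))) := by
  rw [SimpleGraph.cycleGraph_adj']
  right
  rw [show j + ((1 : ℕ) : Fin (m + 4)) - j = ((1 : ℕ) : Fin (m + 4)) from by ring,
    Fin.val_natCast, Nat.mod_eq_of_lt (by omega)]

end Aux

/-- Given a co-chordal graph `G` with `x₁` a simplicial vertex of `Gᶜ`, the graph
`G̃` on `V(G) \ {x₁}` whose edges are those of `G \ x₁` together with the edges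
`{u,v}` of `Gᶜ \ x₁` with `N_{Gᶜ}(x₁) ∩ {u,v} = ∅` is again co-chordal. -/
theorem stmt8 {V : Type*} [Fintype V] (G : SimpleGraph V) (x₁ : V)
    (hchord : Gᶜ.IsChordal)
    (hsimp : ∀ u ∈ Gᶜ.neighborSet x₁, ∀ v ∈ Gᶜ.neighborSet x₁, u ≠ v → Gᶜ.Adj u v) :
    (((SimpleGraph.fromRel fun u v : V =>
        G.Adj u v ∨ (Gᶜ.Adj u v ∧ u ∉ Gᶜ.neighborSet x₁ ∧ v ∉ Gᶜ.neighborSet x₁)).induce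
      {v : V | v ≠ x₁})ᶜ).IsChordal := by
  set Y := Gᶜ.neighborSet x₁ with hY
  set Gt := (((SimpleGraph.fromRel fun u v : V =>
        G.Adj u v ∨ (Gᶜ.Adj u v ∧ u ∉ Y ∧ v ∉ Y)).induce
      {v : V | v ≠ x₁})ᶜ) with hGt
  -- characterization of adjacency in Gt
  have key : ∀ u v : {v : V // v ∈ {v : V | v ≠ x₁}}, Gt.Adj u v ↔
      ((u : V) ≠ v ∧ Gᶜ.Adj (u : V) v ∧ ((u : V) ∈ Y ∨ (v : V) ∈ Y)) := by
    intro u v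
    have hfr : ∀ a b : V, (SimpleGraph.fromRel fun u v : V =>
        G.Adj u v ∨ (Gᶜ.Adj u v ∧ u ∉ Y ∧ v ∉ Y)).Adj a b ↔
        a ≠ b ∧ ((G.Adj a b ∨ (Gᶜ.Adj a b ∧ a ∉ Y ∧ b ∉ Y)) ∨
          (G.Adj b a ∨ (Gᶜ.Adj b a ∧ b ∉ Y ∧ a ∉ Y))) := fun a b =>
      SimpleGraph.fromRel_adj _ _ _
    have hGt' : Gt.Adj u v ↔ u ≠ v ∧ ¬ (SimpleGraph.fromRel fun u v : V =>
        G.Adj u v ∨ (Gᶜ.Adj u v ∧ u ∉ Y ∧ v ∉ Y)).Adj (u : V) (v : V) := Iff.rfl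
    rw [hGt', hfr]
    have hsub : (u ≠ v) ↔ (u : V) ≠ (v : V) := Subtype.coe_injective.ne_iff.symm
    have hGc : ∀ a b : V, Gᶜ.Adj a b ↔ a ≠ b ∧ ¬ G.Adj a b := fun _ _ => Iff.rfl
    constructor
    · rintro ⟨hne, h⟩
      have hne' : (u : V) ≠ v := hsub.mp hne
      have hnG : ¬ G.Adj (u : V) v := fun hadj => h ⟨hne', Or.inl (Or.inl hadj)⟩
      refine ⟨hne', (hGc _ _).mpr ⟨hne', hnG⟩, ?_⟩
      by_contra hc
      push_neg at hc
      exact h ⟨hne', Or.inl (Or.inr ⟨(hGc _ _).mpr ⟨hne', hnG⟩, hc.1, hc.2⟩)⟩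
    · rintro ⟨hne', hGcadj, hYuv⟩
      have hnG : ¬ G.Adj (u : V) v := ((hGc _ _).mp hGcadj).2
      refine ⟨hsub.mpr hne', ?_⟩
      rintro ⟨-, (hadj | ⟨-, hu, hv⟩) | (hadj | ⟨-, hv, hu⟩)⟩
      · exact hnG hadj
      · rcases hYuv with h | h
        · exact hu h
        · exact hv h
      · exact hnG ((G.adj_comm _ _).mp hadj)
      · rcases hYuv with h | h
        · exact hu h
        · exact hv h
  intro n hn
  obtain ⟨m, rfl⟩ : ∃ m, n = m + 4 := ⟨n - 4, by omega⟩
  constructor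
  intro f
  -- every cycle edge has an endpoint in Y
  have hedge : ∀ i : Fin (m + 4),
      ((f i : V) ∈ Y ∨ (f (i + ((1 : ℕ) : Fin (m + 4))) : V) ∈ Y) := by
    intro i
    have := f.map_rel_iff.mpr (cycle_adj_one m i)
    exact ((key _ _).mp this).2.2
  -- vertices in Y are pairwise adjacent in the cycle
  have hclique : ∀ i j : Fin (m + 4), (f i : V) ∈ Y → (f j : V) ∈ Y → i ≠ j →
      (SimpleGraph.cycleGraph (m + 4)).Adj i j := by
    intro i j hi hj hij
    have hfij : f i ≠ f j := fun h => hij (f.injective h)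
    have hfij' : (f i : V) ≠ (f j : V) := Subtype.coe_injective.ne_iff.mpr hfij
    have hadj : Gᶜ.Adj (f i : V) (f j : V) := hsimp _ hi _ hj hfij'
    exact f.map_rel_iff.mp ((key (f i) (f j)).mpr ⟨hfij', hadj, Or.inl hi⟩)
  -- find i with f i ∈ Y
  obtain ⟨i, hi⟩ : ∃ i : Fin (m + 4), (f i : V) ∈ Y := by
    rcases hedge 0 with h | h
    · exact ⟨0, h⟩
    · exact ⟨_, h⟩
  -- f (i+2) ∉ Y since i and i+2 are non-adjacent
  have h2 : (f (i + ((2 : ℕ) : Fin (m + 4))) : V) ∉ Y := fun h =>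
    cycle_notadj_two m i (hclique _ _ hi h (cycle_ne_two m i))
  -- hence f (i+1) ∈ Y and f (i+3) ∈ Y
  have e12 : i + ((1 : ℕ) : Fin (m + 4)) + ((1 : ℕ) : Fin (m + 4))
      = i + ((2 : ℕ) : Fin (m + 4)) := by push_cast; ring
  have e23 : i + ((2 : ℕ) : Fin (m + 4)) + ((1 : ℕ) : Fin (m + 4))
      = i + ((1 : ℕ) : Fin (m + 4)) + ((2 : ℕ) : Fin (m + 4)) := by push_cast; ring
  have h1 : (f (i + ((1 : ℕ) : Fin (m + 4))) : V) ∈ Y := by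
    rcases hedge (i + ((1 : ℕ) : Fin (m + 4))) with h | h
    · exact h
    · rw [e12] at h; exact absurd h h2
  have h3 : (f (i + ((1 : ℕ) : Fin (m + 4)) + ((2 : ℕ) : Fin (m + 4))) : V) ∈ Y := by
    rcases hedge (i + ((2 : ℕ) : Fin (m + 4))) with h | h
    · exact absurd h h2
    · rw [e23] at h; exact h
  exact cycle_notadj_two m _ (hclique _ _ h1 h3 (cycle_ne_two m _))
end

section
/- Let G be a co-chordal graph, let x_1 be a simplicial vertex of G^c, set Y = N_{G^c}(x_1) and W = N_G(x_1). For every (r+1)-subset S of V(G) \ {x_1} with G[S] connected, and every vertex y ∈ Y ∩ S, the induced subgraph G[(S \ {y}) ∪ {x_1}] is connected. Moreover, if Y ∩ S = ∅, then for every w ∈ W ∩ S, G[(S \ {w}) ∪ {x_1}] is connected. -/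
/-- Let `G` be co-chordal, `x₁` a simplicial vertex of `Gᶜ`, `Y = N_{Gᶜ}(x₁)`,
`W = N_G(x₁)`.  For every `(r+1)`-subset `S ⊆ V(G) \ {x₁}` with `G[S]` connected:
for each `y ∈ Y ∩ S` the graph `G[(S \ {y}) ∪ {x₁}]` is connected, and if
`Y ∩ S = ∅` then for each `w ∈ W ∩ S` the graph `G[(S \ {w}) ∪ {x₁}]` is connected. -/
theorem stmt9 {V : Type*} [Fintype V] (G : SimpleGraph V) (x₁ : V)
    (hchord : Gᶜ.IsChordal)
    (hsimp : ∀ u ∈ Gᶜ.neighborSet x₁, ∀ v ∈ Gᶜ.neighborSet x₁, u ≠ v → Gᶜ.Adj u v)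
    (r : ℕ) (S : Finset V) (hx : x₁ ∉ S) (hcard : S.card = r + 1)
    (hconn : (G.induce (S : Set V)).Connected) :
    (∀ y ∈ Gᶜ.neighborSet x₁, y ∈ S →
        (G.induce (insert x₁ ((S : Set V) \ {y}))).Connected) ∧
    ((∀ y ∈ Gᶜ.neighborSet x₁, y ∉ S) →
        ∀ w ∈ G.neighborSet x₁, w ∈ S →
          (G.induce (insert x₁ ((S : Set V) \ {w}))).Connected) := by
  classical
  constructor
  · intro y hy hyS
    -- key: every G-neighbor of y is a G-neighbor of x₁
    have key : ∀ v, G.Adj y v → G.Adj x₁ v := by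
      intro v hv
      by_cases hvx : v = x₁
      · subst hvx
        exact absurd hv.symm hy.2
      by_cases hvY : v ∈ Gᶜ.neighborSet x₁
      · have := hsimp y hy v hvY (G.ne_of_adj hv)
        exact absurd hv this.2
      · by_contra hnot
        exact hvY ⟨Ne.symm hvx, hnot⟩
    set T : Set V := insert x₁ ((S : Set V) \ {y}) with hT
    have hyT : y ∉ T := by
      intro h
      rcases h with h | h
      · exact hx (h ▸ hyS)
      · exact h.2 rfl
    -- define the hom
    let f0 : ∀ v : V, v ∈ (S : Set V) → ↥T := fun v hv =>
      if h : v = y then ⟨x₁, Or.inl rfl⟩ else ⟨v, Or.inr ⟨hv, h⟩⟩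
    have f0y : ∀ v hv, v = y → f0 v hv = ⟨x₁, Or.inl rfl⟩ := fun v hv h => dif_pos h
    have f0n : ∀ v hv (h : ¬ v = y), f0 v hv = ⟨v, Or.inr ⟨hv, h⟩⟩ := fun v hv h => dif_neg h
    have hcoe : ∀ v hv, ((f0 v hv : ↥T) : V) = if v = y then x₁ else v := by
      intro v hv
      by_cases h : v = y
      · rw [f0y v hv h, if_pos h]
      · rw [f0n v hv h, if_neg h]
    let f : (G.induce (S : Set V)) →g (G.induce T) :=
      { toFun := fun v => f0 v v.2
        map_rel' := by
          rintro ⟨u, hu⟩ ⟨v, hv⟩ huv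
          simp only [SimpleGraph.comap_adj, Function.Embedding.coe_subtype] at huv ⊢
          rw [hcoe u hu, hcoe v hv]
          by_cases h1 : u = y <;> by_cases h2 : v = y
          · exact absurd (h1.trans h2.symm) (G.ne_of_adj huv)
          · subst h1
            simpa [h2] using key v huv
          · subst h2
            simpa [h1] using (key u huv.symm).symm
          · simpa [h1, h2] using huv }
    have hsurj : Function.Surjective f := by
      rintro ⟨t, ht⟩
      rcases ht with h | h
      · exact ⟨⟨y, hyS⟩, (f0y y hyS rfl).trans (Subtype.ext h.symm)⟩
      · exact ⟨⟨t, h.1⟩, f0n t h.1 (fun hc => h.2 hc)⟩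
    exact hconn.map f hsurj
  · intro hY w hw hwS
    set T : Set V := insert x₁ ((S : Set V) \ {w}) with hT
    have hadj : ∀ v ∈ T, v ≠ x₁ → G.Adj x₁ v := by
      rintro v (h | h) hne
      · exact absurd h hne
      · by_contra hnot
        exact hY v ⟨Ne.symm (fun he => hx (he ▸ h.1)), hnot⟩ h.1
    have hx₁T : x₁ ∈ T := Or.inl rfl
    rw [SimpleGraph.connected_iff]
    refine ⟨?_, ⟨⟨x₁, hx₁T⟩⟩⟩
    have hu : ∀ (z : T), (G.induce T).Reachable z ⟨x₁, hx₁T⟩ := by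
      rintro ⟨z, hz⟩
      by_cases hze : z = x₁
      · exact (Subtype.ext hze : (⟨z, hz⟩ : T) = ⟨x₁, hx₁T⟩) ▸ SimpleGraph.Reachable.refl _
      · exact SimpleGraph.Adj.reachable (by
          simp only [SimpleGraph.comap_adj, Function.Embedding.coe_subtype]
          exact (hadj z hz hze).symm)
    exact fun u v => (hu u).trans (hu v).symm
end

section
/- Let G be a gap-free, claw-free finite simple graph containing a leaf (a vertex of degree one). Then V(G) can be partitioned as Y ⊔ W where G[Y] is a clique and W is an independent set in G; consequently both G and G^c are chordal. -/
lemma cyc_mk_adj {n i j : ℕ} (hij : i < j) (hj : j < n) :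
    (SimpleGraph.cycleGraph n).Adj ⟨i, by omega⟩ ⟨j, hj⟩ ↔
      (j - i = 1 ∨ n - (j - i) = 1) := by
  rw [SimpleGraph.cycleGraph_adj', Fin.sub_def, Fin.sub_def]
  simp only [Fin.val_mk]
  rw [show n - i + j = (j - i) + n by omega, Nat.add_mod_right,
    Nat.mod_eq_of_lt (by omega), show n - j + i = (n - (j - i)) by omega,
    Nat.mod_eq_of_lt (by omega)]
  exact or_comm

set_option maxHeartbeats 1000000 in
lemma split_chordal {V : Type*} (G : SimpleGraph V) (Y W : Set V)
    (hcover : Y ∪ W = Set.univ) (hdisj : Disjoint Y W)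
    (hY : ∀ u ∈ Y, ∀ v ∈ Y, u ≠ v → G.Adj u v)
    (hW : ∀ u ∈ W, ∀ v ∈ W, ¬ G.Adj u v) : G.IsChordal := by
  intro n hn
  constructor
  intro f
  obtain ⟨m, rfl⟩ : ∃ m, n = m + 4 := ⟨n - 4, by omega⟩
  have mem : ∀ x : V, (x ∈ Y ∧ x ∉ W) ∨ (x ∈ W ∧ x ∉ Y) := by
    intro x
    have hx : x ∈ Y ∪ W := hcover ▸ Set.mem_univ x
    rcases hx with h | h
    · exact Or.inl ⟨h, fun hw => Set.disjoint_left.mp hdisj h hw⟩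
    · exact Or.inr ⟨h, fun hy => Set.disjoint_left.mp hdisj hy h⟩
  have h0 : (0:ℕ) < m+4 := by omega
  have h1 : (1:ℕ) < m+4 := by omega
  have h2 : (2:ℕ) < m+4 := by omega
  have h3 : (3:ℕ) < m+4 := by omega
  have hN : m+3 < m+4 := by omega
  have A01 : G.Adj (f ⟨0,h0⟩) (f ⟨1,h1⟩) :=
    f.map_adj_iff.mpr ((cyc_mk_adj (by omega) h1).mpr (by omega))
  have A12 : G.Adj (f ⟨1,h1⟩) (f ⟨2,h2⟩) :=
    f.map_adj_iff.mpr ((cyc_mk_adj (by omega) h2).mpr (by omega))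
  have A23 : G.Adj (f ⟨2,h2⟩) (f ⟨3,h3⟩) :=
    f.map_adj_iff.mpr ((cyc_mk_adj (by omega) h3).mpr (by omega))
  have A0N : G.Adj (f ⟨0,h0⟩) (f ⟨m+3,hN⟩) :=
    f.map_adj_iff.mpr ((cyc_mk_adj (by omega) hN).mpr (by omega))
  have N02 : ¬ G.Adj (f ⟨0,h0⟩) (f ⟨2,h2⟩) := fun h => by
    have := f.map_adj_iff.mp h
    rw [cyc_mk_adj (by omega) h2] at this; omega
  have N13 : ¬ G.Adj (f ⟨1,h1⟩) (f ⟨3,h3⟩) := fun h => by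
    have := f.map_adj_iff.mp h
    rw [cyc_mk_adj (by omega) h3] at this; omega
  have N1N : ¬ G.Adj (f ⟨1,h1⟩) (f ⟨m+3,hN⟩) := fun h => by
    have := f.map_adj_iff.mp h
    rw [cyc_mk_adj (by omega) hN] at this; omega
  have inj := f.injective
  have ne02 : f ⟨0,h0⟩ ≠ f ⟨2,h2⟩ :=
    fun h => absurd (congrArg Fin.val (inj h)) (by simp)
  have ne13 : f ⟨1,h1⟩ ≠ f ⟨3,h3⟩ :=
    fun h => absurd (congrArg Fin.val (inj h)) (by simp)
  have ne1N : f ⟨1,h1⟩ ≠ f ⟨m+3,hN⟩ :=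
    fun h => absurd (congrArg Fin.val (inj h)) (by simp)
  have h1Y : f ⟨1,h1⟩ ∈ Y := by
    rcases mem (f ⟨1,h1⟩) with h | h
    · exact h.1
    · exfalso
      have hh0 : f ⟨0,h0⟩ ∈ Y := by
        rcases mem (f ⟨0,h0⟩) with h' | h'
        · exact h'.1
        · exact absurd A01 (hW _ h'.1 _ h.1)
      have hh2 : f ⟨2,h2⟩ ∈ Y := by
        rcases mem (f ⟨2,h2⟩) with h' | h'
        · exact h'.1
        · exact absurd A12 (hW _ h.1 _ h'.1)
      exact N02 (hY _ hh0 _ hh2 ne02)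
  have h3W : f ⟨3,h3⟩ ∈ W := by
    rcases mem (f ⟨3,h3⟩) with h | h
    · exact absurd (hY _ h1Y _ h.1 ne13) N13
    · exact h.1
  have h2Y : f ⟨2,h2⟩ ∈ Y := by
    rcases mem (f ⟨2,h2⟩) with h | h
    · exact h.1
    · exact absurd A23 (hW _ h.1 _ h3W)
  have h0W : f ⟨0,h0⟩ ∈ W := by
    rcases mem (f ⟨0,h0⟩) with h | h
    · exact absurd (hY _ h.1 _ h2Y ne02) N02
    · exact h.1
  have hNY : f ⟨m+3,hN⟩ ∈ Y := by
    rcases mem (f ⟨m+3,hN⟩) with h | h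
    · exact h.1
    · exact absurd A0N (hW _ h0W _ h.1)
  exact N1N (hY _ h1Y _ hNY ne1N)
lemma c4_embed {V : Type*} (H : SimpleGraph V) (a b c d : V)
    (hab : H.Adj a b) (hbc : H.Adj b c) (hcd : H.Adj c d) (hda : H.Adj d a)
    (hac : ¬ H.Adj a c) (hbd : ¬ H.Adj b d) (nac : a ≠ c) (nbd : b ≠ d) :
    Nonempty (SimpleGraph.cycleGraph 4 ↪g H) := by
  have nab : a ≠ b := H.ne_of_adj hab
  have nbc : b ≠ c := H.ne_of_adj hbc
  have ncd : c ≠ d := H.ne_of_adj hcd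
  have nda : d ≠ a := H.ne_of_adj hda
  have hba := hab.symm; have hcb := hbc.symm; have hdc := hcd.symm
  have had := hda.symm
  have hca : ¬ H.Adj c a := fun h => hac h.symm
  have hdb : ¬ H.Adj d b := fun h => hbd h.symm
  have hc : ∀ i j : Fin 4, (SimpleGraph.cycleGraph 4).Adj i j ↔
      (i.val, j.val) ∈ [(0,1),(1,0),(1,2),(2,1),(2,3),(3,2),(3,0),(0,3)] := by decide
  refine ⟨⟨⟨![a,b,c,d], ?_⟩, ?_⟩⟩
  · intro i j hij
    fin_cases i <;> fin_cases j <;> simp_all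
  · intro i j
    fin_cases i <;> fin_cases j <;>
      simp_all [hc, H.irrefl] <;> assumption

/-- `G` is claw-free: no induced claw, i.e. no vertex `x` with three pairwise
non-adjacent neighbours. -/
def SimpleGraph.IsClawFree {V : Type*} (G : SimpleGraph V) : Prop :=
  ∀ x y₁ y₂ y₃ : V, y₁ ≠ y₂ → y₁ ≠ y₃ → y₂ ≠ y₃ →
    G.Adj x y₁ → G.Adj x y₂ → G.Adj x y₃ →
    ¬ (¬ G.Adj y₁ y₂ ∧ ¬ G.Adj y₁ y₃ ∧ ¬ G.Adj y₂ y₃)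

/-- A gap-free, claw-free graph with a leaf has a vertex partition `Y ⊔ W` with
`G[Y]` a clique and `W` independent; consequently both `G` and `Gᶜ` are chordal. -/
theorem stmt11 {V : Type*} [Fintype V] (G : SimpleGraph V)
    (hgap : IsEmpty (SimpleGraph.cycleGraph 4 ↪g Gᶜ))
    (hclaw : G.IsClawFree)
    (hleaf : ∃ x : V, (G.neighborSet x).ncard = 1) :
    (∃ Y W : Set V, Y ∪ W = Set.univ ∧ Disjoint Y W ∧
        (∀ u ∈ Y, ∀ v ∈ Y, u ≠ v → G.Adj u v) ∧
        (∀ u ∈ W, ∀ v ∈ W, ¬ G.Adj u v)) ∧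
      G.IsChordal ∧ Gᶜ.IsChordal := by
  obtain ⟨x, hx⟩ := hleaf
  obtain ⟨y, hy⟩ := Set.ncard_eq_one.mp hx
  have hxy : G.Adj x y := by
    have : y ∈ G.neighborSet x := by rw [hy]; exact rfl
    exact this
  have hadj : ∀ v, G.Adj x v → v = y := by
    intro v h
    have : v ∈ G.neighborSet x := h
    rwa [hy, Set.mem_singleton_iff] at this
  have hxney : x ≠ y := G.ne_of_adj hxy
  set Y : Set V := {v | v = y ∨ G.Adj y v} \ {x} with hYdef
  set W : Set V := {v | v ≠ y ∧ ¬ G.Adj y v} ∪ {x} with hWdef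
  have hcover : Y ∪ W = Set.univ := by
    ext v
    simp only [Set.mem_univ, iff_true, hYdef, hWdef, Set.mem_union, Set.mem_diff,
      Set.mem_setOf_eq, Set.mem_singleton_iff]
    by_cases hvx : v = x
    · right; right; exact hvx
    · by_cases hvy : v = y
      · left; exact ⟨Or.inl hvy, hvx⟩
      · by_cases ha : G.Adj y v
        · left; exact ⟨Or.inr ha, hvx⟩
        · right; left; exact ⟨hvy, ha⟩
  have hdisj : Disjoint Y W := by
    rw [Set.disjoint_left]
    rintro v ⟨hv, hvx⟩ (⟨hvy, hna⟩ | hvx')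
    · rcases hv with rfl | h
      · exact hvy rfl
      · exact hna h
    · exact hvx hvx'
  have hYc : ∀ u ∈ Y, ∀ v ∈ Y, u ≠ v → G.Adj u v := by
    rintro u ⟨hu, hux⟩ v ⟨hv, hvx⟩ huv
    simp only [Set.mem_singleton_iff] at hux hvx
    rcases hu with rfl | hu
    · rcases hv with rfl | hv
      · exact absurd rfl huv
      · exact hv
    · rcases hv with rfl | hv
      · exact hu.symm
      · have huy : u ≠ y := fun h => by subst h; exact G.irrefl hu
        have hvy : v ≠ y := fun h => by subst h; exact G.irrefl hv
        have h1 : ¬ G.Adj x u := fun h => huy (hadj u h)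
        have h2 : ¬ G.Adj x v := fun h => hvy (hadj v h)
        have := hclaw y x u v (Ne.symm hux) (Ne.symm hvx) huv hxy.symm hu hv
        by_contra hna
        exact this ⟨h1, h2, hna⟩
  have hWi : ∀ u ∈ W, ∀ v ∈ W, ¬ G.Adj u v := by
    rintro u hu v hv hadjuv
    have huv : u ≠ v := G.ne_of_adj hadjuv
    rcases hu with ⟨huy, hnu⟩ | hux
    · rcases hv with ⟨hvy, hnv⟩ | hvx
      · -- both non-neighbours of y : build a C4 in Gᶜ on x,u,y,v
        have hux : u ≠ x := fun h => by subst h; exact hnu hxy.symm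
        have hvx : v ≠ x := fun h => by subst h; exact hnv hxy.symm
        have hnxu : ¬ G.Adj x u := fun h => huy (hadj u h)
        have hnxv : ¬ G.Adj x v := fun h => hvy (hadj v h)
        refine hgap.elim ?_
        have := c4_embed Gᶜ x u y v
          ⟨Ne.symm hux, hnxu⟩ ⟨huy, fun h => hnu h.symm⟩
          ⟨Ne.symm hvy, hnv⟩ ⟨hvx, fun h => hnxv h.symm⟩
          (fun h => h.2 hxy) (fun h => h.2 hadjuv) hxney huv
        exact this.some
      · -- u non-neighbour of y, v = x
        rw [Set.mem_singleton_iff] at hvx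
        subst hvx
        exact huy (hadj u hadjuv.symm)
    · rw [Set.mem_singleton_iff] at hux
      subst hux
      rcases hv with ⟨hvy, hnv⟩ | hvx
      · exact hvy (hadj v hadjuv)
      · rw [Set.mem_singleton_iff] at hvx
        exact huv hvx.symm
  refine ⟨⟨Y, W, hcover, hdisj, hYc, hWi⟩, ?_, ?_⟩
  · exact split_chordal G Y W hcover hdisj hYc hWi
  · refine split_chordal Gᶜ W Y (by rw [Set.union_comm]; exact hcover) hdisj.symm ?_ ?_
    · intro u hu v hv huv
      exact ⟨huv, hWi u hu v hv⟩
    · intro u hu v hv hadjuv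
      rcases eq_or_ne u v with rfl | huv
      · exact Gᶜ.irrefl hadjuv
      · exact hadjuv.2 (hYc u hu v hv huv)
end

section
/- Let G be a finite simple graph whose complement G^c has no induced 4-cycle, and let r ≥ 2. If F ⊆ V(G) is r-independent, then at most one connected component of the induced subgraph G[F] has more than one vertex. -/
/-- A set `W` of vertices is `r`-independent in `G` if every connected component
of the induced subgraph `G[W]` has at most `r` vertices. -/
def SimpleGraph.IsRIndepSet {V : Type*} (G : SimpleGraph V) (r : ℕ) (W : Set V) : Prop :=
  ∀ c : (G.induce W).ConnectedComponent, c.supp.ncard ≤ r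

/-- A component with more than one vertex contains an edge. -/
lemma exists_adj_of_one_lt_ncard {W : Type*} (H : SimpleGraph W)
    (c : H.ConnectedComponent) (hc : 1 < c.supp.ncard) :
    ∃ a b : W, H.Adj a b ∧ H.connectedComponentMk a = c ∧ H.connectedComponentMk b = c := by
  obtain ⟨a, ha⟩ := Set.nonempty_of_ncard_ne_zero (s := c.supp) (by omega)
  obtain ⟨b, hb, hba⟩ := Set.exists_ne_of_one_lt_ncard hc a
  rw [SimpleGraph.ConnectedComponent.mem_supp_iff] at ha hb
  have hreach : H.Reachable b a := SimpleGraph.ConnectedComponent.exact (hb.trans ha.symm)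
  obtain ⟨w⟩ := hreach
  cases w with
  | nil => exact absurd rfl hba
  | @cons _ z _ h p =>
    refine ⟨b, z, h, hb, ?_⟩
    rw [← hb, SimpleGraph.ConnectedComponent.eq]
    exact ⟨.cons h.symm .nil⟩

/-- If `Gᶜ` has no induced 4-cycle, `r ≥ 2` and `F` is `r`-independent, then at
most one connected component of `G[F]` has more than one vertex. -/
theorem stmt12 {V : Type*} [Fintype V] (G : SimpleGraph V)
    (h4 : IsEmpty (SimpleGraph.cycleGraph 4 ↪g Gᶜ))
    (r : ℕ) (hr : 2 ≤ r) (F : Set V) (hF : G.IsRIndepSet r F) :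
    ∀ c₁ c₂ : (G.induce F).ConnectedComponent,
      1 < c₁.supp.ncard → 1 < c₂.supp.ncard → c₁ = c₂ := by
  intro c₁ c₂ h₁ h₂
  by_contra hne
  obtain ⟨a, b, hab, ha, hb⟩ := exists_adj_of_one_lt_ncard _ c₁ h₁
  obtain ⟨c, d, hcd, hc, hd⟩ := exists_adj_of_one_lt_ncard _ c₂ h₂
  have cross : ∀ x y : F, (G.induce F).connectedComponentMk x = c₁ →
      (G.induce F).connectedComponentMk y = c₂ → Gᶜ.Adj ↑x ↑y := by
    intro x y hx hy
    have hxy : (x : V) ≠ y := by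
      intro h
      exact hne (by rw [← hx, ← hy, Subtype.coe_injective h])
    refine ⟨hxy, fun hGxy => ?_⟩
    apply hne
    rw [← hx, ← hy, SimpleGraph.ConnectedComponent.eq]
    exact SimpleGraph.Adj.reachable (by exact hGxy)
  have hac := cross a c ha hc
  have had := cross a d ha hd
  have hbc := cross b c hb hc
  have hbd := cross b d hb hd
  have hGab : G.Adj ↑a ↑b := hab
  have hGcd : G.Adj ↑c ↑d := hcd
  have hab' : Gᶜ.Adj ↑a ↑b → False := fun h => h.2 hGab
  have hcd' : Gᶜ.Adj ↑c ↑d → False := fun h => h.2 hGcd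
  let f : Fin 4 → V := ![↑a, ↑c, ↑b, ↑d]
  refine h4.elim ⟨⟨f, ?_⟩, ?_⟩
  · intro i j hij
    fin_cases i <;> fin_cases j <;>
      first
        | rfl
        | exact absurd hij hac.ne | exact absurd hij hac.ne.symm
        | exact absurd hij had.ne | exact absurd hij had.ne.symm
        | exact absurd hij hbc.ne' | exact absurd hij hbc.ne'.symm
        | exact absurd hij hbd.ne | exact absurd hij hbd.ne.symm
        | exact absurd hij hGab.ne | exact absurd hij hGab.ne.symm
        | exact absurd hij hGcd.ne | exact absurd hij hGcd.ne.symm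
  · intro i j
    fin_cases i <;> fin_cases j <;>
      first
        | exact iff_of_false (fun h => h.ne rfl) (by decide)
        | exact iff_of_true hac (by decide) | exact iff_of_true hac.symm (by decide)
        | exact iff_of_true had (by decide) | exact iff_of_true had.symm (by decide)
        | exact iff_of_true hbc (by decide) | exact iff_of_true hbc.symm (by decide)
        | exact iff_of_true hbd (by decide) | exact iff_of_true hbd.symm (by decide)
        | exact iff_of_false hab' (by decide) | exact iff_of_false (fun h => hab' h.symm) (by decide)
        | exact iff_of_false hcd' (by decide) | exact iff_of_false (fun h => hcd' h.symm) (by decide)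
end

section
/- Let G be a finite simple graph whose complement G^c is chordal, let r ≥ 2, and let F ⊆ V(G) with |F| = r such that G[F] is connected. Then F is contained in a unique facet (maximal face) of the r-independence complex Ind_r(G). -/
open SimpleGraph

/-- If the complement is chordal, there is no configuration a-b, x-y edges with
no edges between {a,b} and {x,y} and all distinct (it would give an induced 4-cycle
in the complement). -/
lemma aux_noC4 {V : Type*} {G : SimpleGraph V} (hchord : Gᶜ.IsChordal)
    {a b x y : V} (hab : G.Adj a b) (hxy : G.Adj x y)
    (hax : ¬ G.Adj a x) (hay : ¬ G.Adj a y) (hbx : ¬ G.Adj b x) (hby : ¬ G.Adj b y)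
    (nax : a ≠ x) (nay : a ≠ y) (nbx : b ≠ x) (nby : b ≠ y) : False := by
  have nab : a ≠ b := hab.ne
  have nxy : x ≠ y := hxy.ne
  have hxa : ¬ G.Adj x a := fun h => hax h.symm
  have hya : ¬ G.Adj y a := fun h => hay h.symm
  have hxb : ¬ G.Adj x b := fun h => hbx h.symm
  have hyb : ¬ G.Adj y b := fun h => hby h.symm
  have nxa : x ≠ a := nax.symm
  have nya : y ≠ a := nay.symm
  have nxb : x ≠ b := nbx.symm
  have nyb : y ≠ b := nby.symm
  have nba : b ≠ a := nab.symm
  have nyx : y ≠ x := nxy.symm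
  have hba : G.Adj b a := hab.symm
  have hyx : G.Adj y x := hxy.symm
  refine (hchord 4 le_rfl).elim' ⟨⟨![a, x, b, y], ?_⟩, ?_⟩
  · intro u v huv
    fin_cases u <;> fin_cases v <;> simp_all
  · intro u v
    change Gᶜ.Adj (![a, x, b, y] u) (![a, x, b, y] v) ↔ _
    fin_cases u <;> fin_cases v <;>
      simp_all [SimpleGraph.compl_adj, SimpleGraph.cycleGraph_adj] <;> try decide

/-- Reachability in an induced subgraph is monotone in the vertex set. -/
lemma aux_reach_mono {V : Type*} (G : SimpleGraph V) {s t : Set V} (hst : s ⊆ t) {u v : ↥s}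
    (h : (G.induce s).Reachable u v) :
    (G.induce t).Reachable ⟨u.1, hst u.2⟩ ⟨v.1, hst v.2⟩ := by
  let φ : (G.induce s) →g (G.induce t) :=
    ⟨fun w => ⟨w.1, hst w.2⟩, fun {p q} hpq => by simpa using hpq⟩
  exact h.map φ

/-- If `Gᶜ` is chordal, `r ≥ 2`, and `F ⊆ V(G)` has `|F| = r` with `G[F]` connected,
then `F` is contained in a unique facet (inclusion-maximal face) of `Ind_r(G)`. -/
theorem stmt13 {V : Type*} [Fintype V] (G : SimpleGraph V)
    (hchord : Gᶜ.IsChordal) (r : ℕ) (hr : 2 ≤ r)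
    (F : Finset V) (hcard : F.card = r)
    (hconn : (G.induce (F : Set V)).Connected) :
    ∃! M : Finset V, G.IsRIndepSet r (M : Set V) ∧
      (∀ M' : Finset V, G.IsRIndepSet r (M' : Set V) → M ⊆ M' → M' = M) ∧
      F ⊆ M := by
  classical
  -- find an edge of G inside F
  obtain ⟨a, ha, b, hb, hab⟩ : ∃ a ∈ F, ∃ b ∈ F, G.Adj a b := by
    have h2 : 1 < F.card := by omega
    obtain ⟨u, hu, v, hv, huv⟩ := Finset.one_lt_card.mp h2
    obtain ⟨w⟩ := hconn.preconnected ⟨u, hu⟩ ⟨v, hv⟩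
    cases w with
    | nil => exact absurd rfl huv
    | cons h _ =>
      rename_i z _
      exact ⟨u, hu, z.1, z.2, by simpa using h⟩
  -- the set of common non-neighbours of F
  set A : Finset V := Finset.univ.filter (fun v => v ∉ F ∧ ∀ f ∈ F, ¬ G.Adj v f) with hA
  have hAmem : ∀ v, v ∈ A ↔ v ∉ F ∧ ∀ f ∈ F, ¬ G.Adj v f := by
    intro v; simp [hA]
  -- A is an independent set in G
  have hAindep : ∀ x ∈ A, ∀ y ∈ A, ¬ G.Adj x y := by
    intro x hx y hy hxy
    have hx' := (hAmem x).mp hx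
    have hy' := (hAmem y).mp hy
    exact aux_noC4 hchord hab hxy
      (fun h => hx'.2 a ha h.symm) (fun h => hy'.2 a ha h.symm)
      (fun h => hx'.2 b hb h.symm) (fun h => hy'.2 b hb h.symm)
      (fun h => hx'.1 (h ▸ ha)) (fun h => hy'.1 (h ▸ ha))
      (fun h => hx'.1 (h ▸ hb)) (fun h => hy'.1 (h ▸ hb))
  set M : Finset V := F ∪ A with hM
  have hFM : F ⊆ M := Finset.subset_union_left
  -- M is r-independent
  have hMindep : G.IsRIndepSet r (M : Set V) := by
    intro c
    obtain ⟨v, hv0⟩ := c.exists_rep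
    have hv : (G.induce (M : Set V)).connectedComponentMk v = c := hv0
    have hvM : v.1 ∈ F ∪ A := by
      have := v.2; simp [hM] at this; exact Finset.mem_union.mpr this
    rcases Finset.mem_union.mp hvM with hvF | hvA
    · -- everything reachable from a vertex in F stays in F
      have key : ∀ (u w : ↥(M : Set V)), (G.induce (M : Set V)).Reachable u w →
          (w : V) ∈ F → (u : V) ∈ F := by
        intro u w hr' hwF
        obtain ⟨p⟩ := hr'
        induction p with
        | nil => exact hwF
        | @cons s t w' h q ih =>
          have htF : (t : V) ∈ F := ih hwF
          have hst : G.Adj s.1 t.1 := by simpa using h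
          by_contra hsF
          have hsA : s.1 ∈ A := by
            have := s.2
            simp only [hM, Finset.coe_union, Set.mem_union, Finset.mem_coe] at this
            tauto
          exact ((hAmem s.1).mp hsA).2 t.1 htF hst
      have hsub : Subtype.val '' c.supp ⊆ (F : Set V) := by
        rintro _ ⟨u, hu, rfl⟩
        have : (G.induce (M : Set V)).Reachable u v := by
          rw [ConnectedComponent.mem_supp_iff] at hu
          exact ConnectedComponent.eq.mp (hu.trans hv.symm)
        exact key u v this hvF
      calc c.supp.ncard = (Subtype.val '' c.supp).ncard :=
              (Set.ncard_image_of_injective _ Subtype.val_injective).symm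
        _ ≤ (F : Set V).ncard := Set.ncard_le_ncard hsub (F : Set V).toFinite
        _ = r := by rw [Set.ncard_coe_finset, hcard]
    · -- v is isolated in G[M]
      have hiso : ∀ (u : ↥(M : Set V)) (p : (G.induce (M : Set V)).Walk v u), v = u := by
        intro u p
        cases p with
        | nil => rfl
        | cons h _ =>
          rename_i z _
          exfalso
          have hadj : G.Adj v.1 z.1 := by simpa using h
          have hzM : z.1 ∈ F ∪ A := by
            have := z.2; simp [hM] at this; exact Finset.mem_union.mpr this
          rcases Finset.mem_union.mp hzM with hzF | hzA
          · exact ((hAmem v.1).mp hvA).2 z.1 hzF hadj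
          · exact hAindep v.1 hvA z.1 hzA hadj
      have hsub : c.supp ⊆ {v} := by
        intro u hu
        rw [ConnectedComponent.mem_supp_iff] at hu
        obtain ⟨p⟩ := (ConnectedComponent.eq.mp (hu.trans hv.symm)).symm
        exact Set.mem_singleton_iff.mpr (hiso u p).symm
      calc c.supp.ncard ≤ ({v} : Set _).ncard :=
              Set.ncard_le_ncard hsub (Set.finite_singleton v)
        _ = 1 := Set.ncard_singleton v
        _ ≤ r := by omega
  -- any r-independent set containing F is contained in M
  have hsub : ∀ M' : Finset V, G.IsRIndepSet r (M' : Set V) → F ⊆ M' → M' ⊆ M := by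
    intro M' hM' hFM' v hv
    by_cases hvF : v ∈ F
    · exact hFM hvF
    · refine Finset.mem_union_right _ ((hAmem v).mpr ⟨hvF, ?_⟩)
      intro f hf hadj
      -- the component of f in G[M'] contains all of F and also v : too big
      set c : (G.induce (M' : Set V)).ConnectedComponent :=
        (G.induce (M' : Set V)).connectedComponentMk ⟨f, hFM' hf⟩ with hc
      have hFsub : (F : Set V) ⊆ Subtype.val '' c.supp := by
        intro f' hf'
        have hreach : (G.induce (F : Set V)).Reachable ⟨f', hf'⟩ ⟨f, hf⟩ :=
          hconn.preconnected _ _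
        have hreach' : (G.induce (M' : Set V)).Reachable ⟨f', hFM' hf'⟩ ⟨f, hFM' hf⟩ :=
          aux_reach_mono G (by exact_mod_cast hFM') hreach
        exact ⟨⟨f', hFM' hf'⟩, by
          rw [ConnectedComponent.mem_supp_iff, hc, ConnectedComponent.eq]; exact hreach', rfl⟩
      have hvsub : v ∈ Subtype.val '' c.supp := by
        refine ⟨⟨v, hv⟩, ?_, rfl⟩
        rw [ConnectedComponent.mem_supp_iff, hc, ConnectedComponent.eq]
        exact SimpleGraph.Adj.reachable (by simpa using hadj)
      have hbig : insert v (F : Set V) ⊆ Subtype.val '' c.supp := by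
        intro z hz
        rcases Set.mem_insert_iff.mp hz with rfl | hz
        · exact hvsub
        · exact hFsub hz
      have h1 : (insert v (F : Set V)).ncard = r + 1 := by
        rw [Set.ncard_insert_of_notMem (by simpa using hvF) (F : Set V).toFinite,
          Set.ncard_coe_finset, hcard]
      have h2 : (insert v (F : Set V)).ncard ≤ r := by
        calc (insert v (F : Set V)).ncard ≤ (Subtype.val '' c.supp).ncard :=
              Set.ncard_le_ncard hbig (Set.toFinite _)
          _ = c.supp.ncard := Set.ncard_image_of_injective _ Subtype.val_injective
          _ ≤ r := hM' c
      omega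
  refine ⟨M, ⟨hMindep, ?_, hFM⟩, ?_⟩
  · intro M' hM' hMM'
    exact Finset.Subset.antisymm (hsub M' hM' (hFM.trans hMM')) hMM'
  · rintro M' ⟨h1, hmax, hF⟩
    exact (hmax M hMindep (hsub M' h1 hF)).symm
end

section
/- Let G be a finite simple graph whose complement G^c has no induced 4-cycle, and let F_1, F_2 be two distinct facets of Ind_r(G) (r ≥ 2) both containing a set F with |F| = r and G[F] connected. Then there exist vertices v ∈ F_2 \ F_1 and w ∈ F_1 \ F_2 with {v,w} ∈ E(G), and together with an edge {u_1,u_2} of G[F] this produces an induced 4-cycle in G^c — a contradiction; hence no such two distinct facets exist. -/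
namespace StmtAux

open SimpleGraph

variable {V : Type*}

/-- From an induced `2K₂` in `G` we get an induced `C₄` in `Gᶜ`. -/
lemma no2K2 (G : SimpleGraph V) (h4 : IsEmpty (SimpleGraph.cycleGraph 4 ↪g Gᶜ))
    {a b c d : V} (hab : G.Adj a b) (hcd : G.Adj c d)
    (hac : ¬G.Adj a c) (had : ¬G.Adj a d) (hbc : ¬G.Adj b c) (hbd : ¬G.Adj b d) : False := by
  have hane : a ≠ b := hab.ne
  have hcne : c ≠ d := hcd.ne
  have hacne : a ≠ c := fun h => had (h ▸ hcd)
  have hadne : a ≠ d := fun h => hac (h ▸ hcd.symm)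
  have hbcne : b ≠ c := fun h => hbd (h ▸ hcd)
  have hbdne : b ≠ d := fun h => hbc (h ▸ hcd.symm)
  let f : Fin 4 → V := ![a, c, b, d]
  have hinj : Function.Injective f := by
    intro i j hij
    fin_cases i <;> fin_cases j <;>
      simp_all [f, hane, hcne, hacne, hadne, hbcne, hbdne, hane.symm, hcne.symm, hacne.symm,
        hadne.symm, hbcne.symm, hbdne.symm]
  refine h4.elim ⟨⟨f, hinj⟩, ?_⟩
  intro i j
  have hsymm : ∀ x y : V, ¬G.Adj x y → ¬G.Adj y x := fun x y h hxy => h hxy.symm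
  fin_cases i <;> fin_cases j <;>
    simp [f, SimpleGraph.cycleGraph_adj, SimpleGraph.compl_adj, hane, hcne, hacne, hadne,
      hbcne, hbdne, hane.symm, hcne.symm, hacne.symm, hadne.symm, hbcne.symm, hbdne.symm,
      hab, hcd, hab.symm, hcd.symm, hac, had, hbc, hbd, hsymm a c hac, hsymm a d had,
      hsymm b c hbc, hsymm b d hbd] <;> decide

/-- In an `r`-independent set `W` containing a connected `r`-set `F`,
no vertex of `F` is adjacent to a vertex of `W \ F`. -/
lemma sep [Finite V] {G : SimpleGraph V} {r : ℕ} {F : Finset V} (hcard : F.card = r)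
    (hconn : (G.induce (F : Set V)).Connected) {W : Finset V}
    (hW : G.IsRIndepSet r (W : Set V)) (hsub : F ⊆ W)
    {x y : V} (hx : x ∈ F) (hy : y ∈ W) (hyF : y ∉ F) : ¬G.Adj x y := by
  intro hadj
  have hxW : x ∈ W := hsub hx
  set c := (G.induce (W : Set V)).connectedComponentMk ⟨x, hxW⟩ with hc
  have hFsub : (F : Set V) ⊆ Subtype.val '' c.supp := by
    intro z hz
    have hzW : z ∈ (W : Set V) := Finset.coe_subset.mpr hsub hz
    have hreach : (G.induce (F : Set V)).Reachable ⟨x, hx⟩ ⟨z, hz⟩ :=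
      hconn.preconnected _ _
    have hle : (F : Set V) ≤ (W : Set V) := Finset.coe_subset.mpr hsub
    have hreach' : (G.induce (W : Set V)).Reachable ⟨x, hxW⟩ ⟨z, hzW⟩ := by
      have := hreach.map (G.induceHomOfLE hle).toHom
      exact this
    exact ⟨⟨z, hzW⟩, by rw [SimpleGraph.ConnectedComponent.mem_supp_iff]
                        exact (SimpleGraph.ConnectedComponent.eq.mpr hreach'.symm), rfl⟩
  have hymem : y ∈ Subtype.val '' c.supp := by
    have hadj' : (G.induce (W : Set V)).Adj ⟨x, hxW⟩ ⟨y, hy⟩ := hadj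
    exact ⟨⟨y, hy⟩, by rw [SimpleGraph.ConnectedComponent.mem_supp_iff]
                       exact (SimpleGraph.ConnectedComponent.eq.mpr hadj'.symm.reachable), rfl⟩
  have hins : insert y (F : Set V) ⊆ Subtype.val '' c.supp :=
    Set.insert_subset hymem hFsub
  have h1 : (insert y (F : Set V)).ncard = r + 1 := by
    rw [Set.ncard_insert_of_notMem (by simpa using hyF) (Set.toFinite _)]
    simp [hcard]
  have h2 : (insert y (F : Set V)).ncard ≤ (Subtype.val '' c.supp).ncard :=
    Set.ncard_le_ncard hins (Set.toFinite _)
  have h3 : (Subtype.val '' c.supp).ncard = c.supp.ncard :=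
    Set.ncard_image_of_injective _ Subtype.val_injective
  have h4 := hW c
  omega

/-- A connected set of size `≥ 2` contains an edge. -/
lemma exists_edge {G : SimpleGraph V} {F : Finset V} (hcard : 2 ≤ F.card)
    (hconn : (G.induce (F : Set V)).Connected) :
    ∃ u₁ ∈ F, ∃ u₂ ∈ F, G.Adj u₁ u₂ := by
  obtain ⟨a, ha, b, hb, hab⟩ := Finset.one_lt_card.mp hcard
  have hreach : (G.induce (F : Set V)).Reachable ⟨a, ha⟩ ⟨b, hb⟩ := hconn.preconnected _ _
  obtain ⟨p⟩ := hreach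
  cases p with
  | nil => exact absurd rfl hab
  | cons h _ =>
    rename_i m _
    exact ⟨a, ha, m.1, m.2, h⟩

/-- Walking in `G[insert v W]` starting inside `W`, when `v` is isolated,
stays inside `W`. -/
lemma walk_stays {G : SimpleGraph V} {W : Set V} {v : V}
    (hv : ∀ w ∈ W, ¬G.Adj v w) :
    ∀ (a b : ↥(insert v W)) (_ : (G.induce (insert v W)).Walk a b) (ha : ↑a ∈ W),
      ∃ hb : ↑b ∈ W, (G.induce W).Reachable ⟨a, ha⟩ ⟨b, hb⟩ := by
  intro a b p
  induction p with
  | nil => intro ha; exact ⟨ha, Reachable.refl _⟩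
  | @cons u m w h p ih =>
    intro ha
    have hadj : G.Adj ↑u ↑m := h
    have hmW : ↑m ∈ W := by
      rcases m.2 with h' | h'
      · have h2 := hadj.symm
        rw [h'] at h2
        exact absurd h2 (hv ↑u ha)
      · exact h'
    obtain ⟨hb, hreach⟩ := ih hmW
    exact ⟨hb, Reachable.trans (SimpleGraph.Adj.reachable (by exact hadj :
      (G.induce W).Adj ⟨↑u, ha⟩ ⟨↑m, hmW⟩)) hreach⟩

/-- Adding an isolated vertex preserves `r`-independence. -/
lemma insert_indep [Finite V] (G : SimpleGraph V) (r : ℕ) (hr : 1 ≤ r) (W : Set V) (v : V)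
    (_hvW : v ∉ W) (hv : ∀ w ∈ W, ¬G.Adj v w) (hW : G.IsRIndepSet r W) :
    G.IsRIndepSet r (insert v W) := by
  intro c
  by_cases hc : c = (G.induce (insert v W)).connectedComponentMk ⟨v, Set.mem_insert _ _⟩
  · have hsub : c.supp ⊆ {⟨v, Set.mem_insert _ _⟩} := by
      intro x hx
      rw [SimpleGraph.ConnectedComponent.mem_supp_iff, hc] at hx
      obtain ⟨p⟩ := (SimpleGraph.ConnectedComponent.eq.mp hx).symm
      cases p with
      | nil => rfl
      | cons h _ =>
        rename_i m _
        have hadj : G.Adj v ↑m := h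
        rcases m.2 with h' | h'
        · exact absurd (h' ▸ hadj) G.irrefl
        · exact absurd hadj (hv ↑m h')
    calc c.supp.ncard ≤ ({⟨v, Set.mem_insert _ _⟩} : Set ↥(insert v W)).ncard :=
          Set.ncard_le_ncard hsub (Set.toFinite _)
      _ = 1 := Set.ncard_singleton _
      _ ≤ r := hr
  · obtain ⟨x₀, hx₀⟩ := c.exists_rep
    have hx₀W : ↑x₀ ∈ W := by
      rcases x₀.2 with h' | h'
      · exact absurd (by rw [← hx₀]
                         exact congrArg (G.induce (insert v W)).connectedComponentMk
                           (Subtype.ext h')) hc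
      · exact h'
    set c' := (G.induce W).connectedComponentMk ⟨↑x₀, hx₀W⟩ with hc'
    have himg : Subtype.val '' c.supp ⊆ Subtype.val '' c'.supp := by
      rintro _ ⟨x, hx, rfl⟩
      rw [SimpleGraph.ConnectedComponent.mem_supp_iff] at hx
      have hreach : (G.induce (insert v W)).Reachable x₀ x :=
        SimpleGraph.ConnectedComponent.eq.mp (hx₀.trans hx.symm)
      obtain ⟨p⟩ := hreach
      obtain ⟨hb, hreach'⟩ := walk_stays hv x₀ x p hx₀W
      exact ⟨⟨↑x, hb⟩, by rw [SimpleGraph.ConnectedComponent.mem_supp_iff]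
                          exact SimpleGraph.ConnectedComponent.eq.mpr hreach'.symm, rfl⟩
    calc c.supp.ncard = (Subtype.val '' c.supp).ncard :=
          (Set.ncard_image_of_injective _ Subtype.val_injective).symm
      _ ≤ (Subtype.val '' c'.supp).ncard := Set.ncard_le_ncard himg (Set.toFinite _)
      _ = c'.supp.ncard := Set.ncard_image_of_injective _ Subtype.val_injective
      _ ≤ r := hW c'

end StmtAux

/-- If `Gᶜ` has no induced 4-cycle and `F` is an `r`-set (`r ≥ 2`) with `G[F]`
connected, then two facets of `Ind_r(G)` both containing `F` must coincide:
no two distinct such facets exist. -/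
theorem stmt18 {V : Type*} [Fintype V] (G : SimpleGraph V)
    (h4 : IsEmpty (SimpleGraph.cycleGraph 4 ↪g Gᶜ))
    (r : ℕ) (hr : 2 ≤ r)
    (F : Finset V) (hcard : F.card = r)
    (hconn : (G.induce (F : Set V)).Connected)
    (F₁ F₂ : Finset V)
    (hF₁ : G.IsRIndepSet r (F₁ : Set V))
    (hF₁max : ∀ M : Finset V, G.IsRIndepSet r (M : Set V) → F₁ ⊆ M → M = F₁)
    (hF₂ : G.IsRIndepSet r (F₂ : Set V))
    (hF₂max : ∀ M : Finset V, G.IsRIndepSet r (M : Set V) → F₂ ⊆ M → M = F₂)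
    (hsub₁ : F ⊆ F₁) (hsub₂ : F ⊆ F₂) :
    F₁ = F₂ := by
  classical
  by_cases hss : F₂ ⊆ F₁
  · exact hF₂max F₁ hF₁ hss
  · exfalso
    obtain ⟨v, hvF₂, hvF₁⟩ := Finset.not_subset.mp hss
    have hvF : v ∉ F := fun h => hvF₁ (hsub₁ h)
    obtain ⟨u₁, hu₁, u₂, hu₂, hadj_u⟩ := StmtAux.exists_edge (hcard ▸ hr) hconn
    have hiso : ∀ w ∈ (F₁ : Set V), ¬G.Adj v w := by
      intro w hw hadj
      have hwF₁ : w ∈ F₁ := hw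
      by_cases hwF : w ∈ F
      · exact StmtAux.sep hcard hconn hF₂ hsub₂ hwF hvF₂ hvF hadj.symm
      · have hvu₁ : ¬G.Adj v u₁ := fun h =>
          StmtAux.sep hcard hconn hF₂ hsub₂ hu₁ hvF₂ hvF h.symm
        have hvu₂ : ¬G.Adj v u₂ := fun h =>
          StmtAux.sep hcard hconn hF₂ hsub₂ hu₂ hvF₂ hvF h.symm
        by_cases hwF₂ : w ∈ F₂
        · have hwu₁ : ¬G.Adj w u₁ := fun h =>
            StmtAux.sep hcard hconn hF₂ hsub₂ hu₁ hwF₂ hwF h.symm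
          have hwu₂ : ¬G.Adj w u₂ := fun h =>
            StmtAux.sep hcard hconn hF₂ hsub₂ hu₂ hwF₂ hwF h.symm
          exact StmtAux.no2K2 G h4 hadj hadj_u hvu₁ hvu₂ hwu₁ hwu₂
        · have hwu₁ : ¬G.Adj w u₁ := fun h =>
            StmtAux.sep hcard hconn hF₁ hsub₁ hu₁ hwF₁ hwF h.symm
          have hwu₂ : ¬G.Adj w u₂ := fun h =>
            StmtAux.sep hcard hconn hF₁ hsub₁ hu₂ hwF₁ hwF h.symm
          exact StmtAux.no2K2 G h4 hadj hadj_u hvu₁ hvu₂ hwu₁ hwu₂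
    have hins : G.IsRIndepSet r ((insert v F₁ : Finset V) : Set V) := by
      rw [Finset.coe_insert]
      exact StmtAux.insert_indep G r (le_trans one_le_two hr) (F₁ : Set V) v
        (by simpa using hvF₁) hiso hF₁
    have := hF₁max (insert v F₁) hins (Finset.subset_insert _ _)
    exact hvF₁ (this ▸ Finset.mem_insert_self v F₁)
end
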